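/- For θ ∈ ℝ define the real symmetric 3×3 matrix ω(θ) with entries ω₁₁(θ) = ω₂₂(θ) = 4(1 + √3·cos θ)², ω₁₂(θ) = ω₂₁(θ) = −2(1 + √3·cos θ)², ω₃₃(θ) = 36·cos²θ, and ω₁₃ = ω₃₁ = ω₂₃ = ω₃₂ = 0. Then for every θ ∈ (0, π/2), the entrywise derivative ω′(θ) is a negative definite matrix. -/

import Mathlib

open scoped Matrix

/-- A real `d × d` matrix is negative definite if it is symmetric and
`xᵀ M x < 0` for all nonzero `x ∈ ℝ^d`. -/
def Matrix.NegDef {d : ℕ} (M : Matrix (Fin d) (Fin d) ℝ) : Prop :=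
  M.IsSymm ∧ ∀ x : Fin d → ℝ, x ≠ 0 → x ⬝ᵥ M.mulVec x < 0

/-- The Gram matrix of the period-lattice generators of the idealized tilt model of
quartz with tilt angle `θ`. -/
noncomputable def quartzGram (θ : ℝ) : Matrix (Fin 3) (Fin 3) ℝ :=
  !![4 * (1 + Real.sqrt 3 * Real.cos θ) ^ 2, -2 * (1 + Real.sqrt 3 * Real.cos θ) ^ 2, 0;
     -2 * (1 + Real.sqrt 3 * Real.cos θ) ^ 2, 4 * (1 + Real.sqrt 3 * Real.cos θ) ^ 2, 0;
     0, 0, 36 * Real.cos θ ^ 2]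

lemma hsq (θ : ℝ) :
    HasDerivAt (fun t : ℝ => (1 + Real.sqrt 3 * Real.cos t) ^ 2)
      (2 * (1 + Real.sqrt 3 * Real.cos θ) ^ 1 * (Real.sqrt 3 * (-Real.sin θ))) θ :=
  ((((Real.hasDerivAt_cos θ).const_mul (Real.sqrt 3)).const_add 1).pow 2)

lemma deriv_a (θ : ℝ) :
    deriv (fun t : ℝ => 4 * (1 + Real.sqrt 3 * Real.cos t) ^ 2) θ
      = -(8 * Real.sqrt 3 * Real.sin θ * (1 + Real.sqrt 3 * Real.cos θ)) := by
  have := ((hsq θ).const_mul (4:ℝ)).deriv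
  rw [this]; ring

lemma deriv_b (θ : ℝ) :
    deriv (fun t : ℝ => -2 * (1 + Real.sqrt 3 * Real.cos t) ^ 2) θ
      = 4 * Real.sqrt 3 * Real.sin θ * (1 + Real.sqrt 3 * Real.cos θ) := by
  have := ((hsq θ).const_mul (-2:ℝ)).deriv
  rw [this]; ring

lemma deriv_c (θ : ℝ) :
    deriv (fun t : ℝ => 36 * Real.cos t ^ 2) θ
      = -(72 * Real.cos θ * Real.sin θ) := by
  have := (((Real.hasDerivAt_cos θ).pow 2).const_mul (36:ℝ)).deriv
  rw [show (fun t : ℝ => 36 * Real.cos t ^ 2) = (fun y => 36 * (Real.cos ^ 2) y) from rfl, this]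
  norm_num
  ring

/-- The entrywise derivative of the quartz Gram curve `ω(θ)` is negative
definite for every `θ ∈ (0, π/2)`. -/
theorem stmt_13 :
    ∀ θ ∈ Set.Ioo 0 (Real.pi / 2),
      Matrix.NegDef (Matrix.of fun i j => deriv (fun t => quartzGram t i j) θ) := by
  intro θ hθ
  set a : ℝ := 4 * Real.sqrt 3 * Real.sin θ * (1 + Real.sqrt 3 * Real.cos θ) with ha
  set b : ℝ := 72 * Real.cos θ * Real.sin θ with hb
  have hM : (Matrix.of fun i j => deriv (fun t => quartzGram t i j) θ)
      = !![-(2*a), a, 0; a, -(2*a), 0; 0, 0, -b] := by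
    ext i j
    fin_cases i <;> fin_cases j <;>
      simp [quartzGram, ha, hb, deriv_a, deriv_b, deriv_c] <;> ring
  rw [hM]
  have hs : 0 < Real.sin θ := Real.sin_pos_of_pos_of_lt_pi hθ.1
    (lt_trans hθ.2 (by linarith [Real.pi_pos]))
  have hc : 0 < Real.cos θ := Real.cos_pos_of_mem_Ioo
    ⟨by linarith [Real.pi_pos, hθ.1], hθ.2⟩
  have h3 : 0 < Real.sqrt 3 := Real.sqrt_pos.mpr (by norm_num)
  have hap : 0 < a := by
    have : 0 < 1 + Real.sqrt 3 * Real.cos θ := by positivity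
    rw [ha]; positivity
  have hbp : 0 < b := by rw [hb]; positivity
  constructor
  · unfold Matrix.IsSymm
    ext i j
    fin_cases i <;> fin_cases j <;> simp [Matrix.transpose]
  · intro x hx
    have hne : x 0 ≠ 0 ∨ x 1 ≠ 0 ∨ x 2 ≠ 0 := by
      by_contra h
      push_neg at h
      apply hx
      funext i
      fin_cases i <;> simp [h.1, h.2.1, h.2.2]
    have key : 0 < x 0 ^ 2 + x 1 ^ 2 + x 2 ^ 2 := by
      rcases hne with h | h | h <;> positivity
    simp [Matrix.mulVec, dotProduct, Fin.sum_univ_three]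
    have h01 := mul_nonneg hap.le (sq_nonneg (x 0 - x 1))
    have h0 := mul_nonneg hap.le (sq_nonneg (x 0))
    have h1 := mul_nonneg hap.le (sq_nonneg (x 1))
    have h2 := mul_nonneg hbp.le (sq_nonneg (x 2))
    rcases hne with h | h | h
    · nlinarith [mul_pos hap (pow_pos (abs_pos.mpr h) 2), sq_abs (x 0)]
    · nlinarith [mul_pos hap (pow_pos (abs_pos.mpr h) 2), sq_abs (x 1)]
    · nlinarith [mul_pos hbp (pow_pos (abs_pos.mpr h) 2), sq_abs (x 2)]
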